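/- Let r ≥ 1 and ν ≥ 1 be integers, N ≥ 0 a natural number, e ∈ ℤ, x ∈ ℂ, and 0 ≤ i ≤ r−1. Then Σ_{n=0}^{r−1} exp(−2πi(i+1/2)n/r) · (1/(rν)) · Σ_{l=0}^{rν−1} exp(πi(N−e+nν)/(rν)) · exp(−2πi(e−nν)l/(rν)) · ( x·exp(−2πi(l+1)/(rν)) + exp(2πil/(rν)) )^N = (1/ν) · Σ_{a=0}^{ν−1} exp( πi(N − e(2(i+ar)+1))/(rν) ) · ( x·exp(−2πi(i+ar+1)/(rν)) + exp(2πi(i+ar)/(rν)) )^N. -/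

import Mathlib

open Finset Complex Real

/-- the summation identity for the `(i,j)`-entry of the matrix product
appearing in the proof of Corollary (eq:eqdiststart-even). -/
theorem stmt12 (r ν : ℕ) (hr : 1 ≤ r) (hν : 1 ≤ ν) (N : ℕ) (e : ℤ) (x : ℂ)
    (i : ℕ) (hi : i < r) :
    (∑ n ∈ Finset.range r,
        Complex.exp (-2 * Real.pi * Complex.I * ((i : ℂ) + 1 / 2) * (n : ℂ) / r) *
          ((1 : ℂ) / ((r : ℂ) * ν) *
            ∑ l ∈ Finset.range (r * ν),
              Complex.exp (Real.pi * Complex.I * ((N : ℂ) - (e : ℂ) + (n : ℂ) * ν) /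
                  ((r : ℂ) * ν)) *
                Complex.exp (-2 * Real.pi * Complex.I * ((e : ℂ) - (n : ℂ) * ν) * (l : ℂ) /
                  ((r : ℂ) * ν)) *
                (x * Complex.exp (-2 * Real.pi * Complex.I * ((l : ℂ) + 1) / ((r : ℂ) * ν)) +
                  Complex.exp (2 * Real.pi * Complex.I * (l : ℂ) / ((r : ℂ) * ν))) ^ N))
      = (1 : ℂ) / (ν : ℂ) *
          ∑ a ∈ Finset.range ν,
            Complex.exp (Real.pi * Complex.I *
                ((N : ℂ) - (e : ℂ) * (2 * ((i : ℂ) + (a : ℂ) * r) + 1)) / ((r : ℂ) * ν)) *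
              (x * Complex.exp (-2 * Real.pi * Complex.I * ((i : ℂ) + (a : ℂ) * r + 1) /
                  ((r : ℂ) * ν)) +
                Complex.exp (2 * Real.pi * Complex.I * ((i : ℂ) + (a : ℂ) * r) /
                  ((r : ℂ) * ν))) ^ N := by
  have hrn : 0 < r := hr
  have hr0 : (r : ℂ) ≠ 0 := Nat.cast_ne_zero.2 (by omega)
  have hν0 : (ν : ℂ) ≠ 0 := Nat.cast_ne_zero.2 (by omega)
  have hπ : (Real.pi : ℂ) ≠ 0 := by exact_mod_cast Real.pi_ne_zero
  have hI2 : (2 : ℂ) * Real.pi * Complex.I ≠ 0 := by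
    simp [hπ, Complex.I_ne_zero]
  set P : ℕ → ℂ := fun l =>
    (x * Complex.exp (-2 * Real.pi * Complex.I * ((l : ℂ) + 1) / ((r : ℂ) * ν)) +
      Complex.exp (2 * Real.pi * Complex.I * (l : ℂ) / ((r : ℂ) * ν))) ^ N with hP
  set D : ℕ → ℂ := fun l =>
    Complex.exp (Real.pi * Complex.I * ((N : ℂ) - (e : ℂ)) / ((r : ℂ) * ν)
      - 2 * Real.pi * Complex.I * (e : ℂ) * (l : ℂ) / ((r : ℂ) * ν)) * P l with hD
  set ζ : ℕ → ℂ := fun l =>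
    Complex.exp (2 * Real.pi * Complex.I * ((l : ℂ) - (i : ℂ)) / r) with hζ
  -- termwise identity
  have tw : ∀ (n l : ℕ),
      Complex.exp (-2 * Real.pi * Complex.I * ((i : ℂ) + 1 / 2) * (n : ℂ) / r) *
        (Complex.exp (Real.pi * Complex.I * ((N : ℂ) - (e : ℂ) + (n : ℂ) * ν) / ((r : ℂ) * ν)) *
          Complex.exp (-2 * Real.pi * Complex.I * ((e : ℂ) - (n : ℂ) * ν) * (l : ℂ) /
            ((r : ℂ) * ν)) * P l)
      = ζ l ^ n * D l := by
    have hhelp : ∀ (u v w s t Q : ℂ), u + v + w = s + t →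
        Complex.exp u * (Complex.exp v * Complex.exp w * Q)
          = Complex.exp s * (Complex.exp t * Q) := by
      intro u v w s t Q h
      rw [show Complex.exp u * (Complex.exp v * Complex.exp w * Q)
          = Complex.exp (u + v + w) * Q by rw [Complex.exp_add, Complex.exp_add]; ring,
        h, Complex.exp_add]
      ring
    intro n l
    rw [hζ, hD]
    simp only
    rw [← Complex.exp_nat_mul]
    refine hhelp _ _ _ _ _ _ ?_
    field_simp
    ring
  -- roots of unity sums
  have key : ∀ l : ℕ, (∑ n ∈ Finset.range r, ζ l ^ n)
      = if l % r = i then (r : ℂ) else 0 := by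
    intro l
    by_cases h : l % r = i
    · rw [if_pos h]
      have hl : l = r * (l / r) + i := by
        conv_lhs => rw [← Nat.div_add_mod l r, h]
      have hζ1 : ζ l = 1 := by
        rw [hζ]
        simp only
        have : 2 * (Real.pi : ℂ) * Complex.I * ((l : ℂ) - (i : ℂ)) / r
            = ((l / r : ℕ) : ℂ) * (2 * Real.pi * Complex.I) := by
          have hc : (l : ℂ) = (r : ℂ) * ((l / r : ℕ) : ℂ) + (i : ℂ) := by
            exact_mod_cast congrArg (Nat.cast : ℕ → ℂ) hl
          rw [hc]; field_simp; ring
        rw [this]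
        exact_mod_cast Complex.exp_int_mul_two_pi_mul_I ((l / r : ℕ) : ℤ)
      simp [hζ1]
    · rw [if_neg h]
      have hζne : ζ l ≠ 1 := by
        intro hone
        rw [hζ] at hone
        simp only at hone
        rw [Complex.exp_eq_one_iff] at hone
        obtain ⟨k, hk⟩ := hone
        have hk2 : (l : ℂ) - (i : ℂ) = (k : ℂ) * r := by
          have := hk
          field_simp at this
          have h3 : ((l : ℂ) - (i : ℂ)) * (2 * Real.pi * Complex.I)
              = ((k : ℂ) * r) * (2 * Real.pi * Complex.I) := by
            rw [mul_comm ((l:ℂ) - i)]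
            rw [show ((k:ℂ) * r) * (2 * (Real.pi:ℂ) * Complex.I)
                = (k : ℂ) * (2 * Real.pi * Complex.I) * r by ring]
            linear_combination (2 * (Real.pi:ℂ) * Complex.I) * this
          exact mul_right_cancel₀ hI2 h3
        have hk3 : (l : ℤ) - (i : ℤ) = k * r := by exact_mod_cast hk2
        -- derive l % r = i, contradiction
        have hl : (l : ℤ) = r * ((l / r : ℕ) : ℤ) + ((l % r : ℕ) : ℤ) := by
          exact_mod_cast (Nat.div_add_mod l r).symm
        have hdvd : (r : ℤ) ∣ ((l % r : ℕ) : ℤ) - (i : ℤ) :=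
          ⟨k - ((l / r : ℕ) : ℤ), by linarith⟩
        have hmlt : l % r < r := Nat.mod_lt _ hrn
        have habs : |((l % r : ℕ) : ℤ) - (i : ℤ)| < (r : ℤ) := by
          rw [abs_lt]; constructor <;> [push_cast; push_cast] <;> omega
        have := Int.eq_zero_of_abs_lt_dvd hdvd habs
        have : l % r = i := by omega
        exact h this
      rw [geom_sum_eq hζne]
      have hzr : ζ l ^ r = 1 := by
        rw [hζ]
        simp only
        rw [← Complex.exp_nat_mul]
        have : (r : ℂ) * (2 * Real.pi * Complex.I * ((l : ℂ) - (i : ℂ)) / r)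
            = (((l : ℤ) - (i : ℤ) : ℤ) : ℂ) * (2 * Real.pi * Complex.I) := by
          push_cast
          field_simp
        rw [this, Complex.exp_int_mul_two_pi_mul_I]
      rw [hzr]
      simp
  -- reindexing
  have reindex : (∑ l ∈ Finset.range (r * ν), (if l % r = i then (r : ℂ) else 0) * D l)
      = ∑ a ∈ Finset.range ν, (r : ℂ) * D (i + a * r) := by
    have : ∀ l ∈ Finset.range (r * ν),
        (if l % r = i then (r : ℂ) else 0) * D l
          = if l % r = i then (r : ℂ) * D l else 0 := by
      intro l _; split <;> simp
    rw [Finset.sum_congr rfl this, ← Finset.sum_filter]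
    refine Finset.sum_nbij' (fun l => l / r) (fun a => i + a * r) ?_ ?_ ?_ ?_ ?_
    · intro l hl
      simp only [Finset.mem_filter, Finset.mem_range] at hl
      simp only [Finset.mem_range]
      exact Nat.div_lt_of_lt_mul (by omega)
    · intro a ha
      simp only [Finset.mem_range] at ha
      simp only [Finset.mem_filter, Finset.mem_range]
      constructor
      · calc i + a * r < r + a * r := by omega
          _ = (a + 1) * r := by ring
          _ ≤ ν * r := Nat.mul_le_mul_right r (by omega)
          _ = r * ν := Nat.mul_comm _ _
      · rw [Nat.add_mul_mod_self_right, Nat.mod_eq_of_lt hi]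
    · intro l hl
      simp only [Finset.mem_filter, Finset.mem_range] at hl
      show i + l / r * r = l
      have := Nat.div_add_mod l r
      rw [mul_comm]
      omega
    · intro a ha
      show (i + a * r) / r = a
      rw [Nat.add_mul_div_right _ _ hrn, Nat.div_eq_of_lt hi, Nat.zero_add]
    · intro l hl
      simp only [Finset.mem_filter, Finset.mem_range] at hl
      show (r : ℂ) * D l = (r : ℂ) * D (i + l / r * r)
      have hll : i + l / r * r = l := by
        have := Nat.div_add_mod l r
        rw [mul_comm]
        omega
      rw [hll]
  -- main computation
  calc
    (∑ n ∈ Finset.range r,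
        Complex.exp (-2 * Real.pi * Complex.I * ((i : ℂ) + 1 / 2) * (n : ℂ) / r) *
          ((1 : ℂ) / ((r : ℂ) * ν) *
            ∑ l ∈ Finset.range (r * ν),
              Complex.exp (Real.pi * Complex.I * ((N : ℂ) - (e : ℂ) + (n : ℂ) * ν) /
                  ((r : ℂ) * ν)) *
                Complex.exp (-2 * Real.pi * Complex.I * ((e : ℂ) - (n : ℂ) * ν) * (l : ℂ) /
                  ((r : ℂ) * ν)) * P l))
        = ∑ n ∈ Finset.range r, ∑ l ∈ Finset.range (r * ν),
            (1 : ℂ) / ((r : ℂ) * ν) * (ζ l ^ n * D l) := by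
          refine Finset.sum_congr rfl fun n _ => ?_
          rw [Finset.mul_sum, Finset.mul_sum]
          refine Finset.sum_congr rfl fun l _ => ?_
          rw [← tw n l]; ring
    _ = ∑ l ∈ Finset.range (r * ν), ∑ n ∈ Finset.range r,
          (1 : ℂ) / ((r : ℂ) * ν) * (ζ l ^ n * D l) := Finset.sum_comm
    _ = ∑ l ∈ Finset.range (r * ν),
          (1 : ℂ) / ((r : ℂ) * ν) * ((∑ n ∈ Finset.range r, ζ l ^ n) * D l) := by
          refine Finset.sum_congr rfl fun l _ => ?_
          rw [Finset.sum_mul, Finset.mul_sum]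
    _ = (1 : ℂ) / ((r : ℂ) * ν) *
          ∑ l ∈ Finset.range (r * ν), (if l % r = i then (r : ℂ) else 0) * D l := by
          rw [Finset.mul_sum]
          exact Finset.sum_congr rfl fun l _ => by rw [key l]
    _ = (1 : ℂ) / ((r : ℂ) * ν) * ∑ a ∈ Finset.range ν, (r : ℂ) * D (i + a * r) := by
          rw [reindex]
    _ = (1 : ℂ) / (ν : ℂ) *
          ∑ a ∈ Finset.range ν,
            Complex.exp (Real.pi * Complex.I *
                ((N : ℂ) - (e : ℂ) * (2 * ((i : ℂ) + (a : ℂ) * r) + 1)) / ((r : ℂ) * ν)) *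
              (x * Complex.exp (-2 * Real.pi * Complex.I * ((i : ℂ) + (a : ℂ) * r + 1) /
                  ((r : ℂ) * ν)) +
                Complex.exp (2 * Real.pi * Complex.I * ((i : ℂ) + (a : ℂ) * r) /
                  ((r : ℂ) * ν))) ^ N := by
          have h2 : ∀ T : ℂ, (1 : ℂ) / ((r : ℂ) * ν) * ((r : ℂ) * T) = 1 / (ν : ℂ) * T := by
            intro T; field_simp
          rw [Finset.mul_sum, Finset.mul_sum]
          refine Finset.sum_congr rfl fun a _ => ?_
          rw [hD, hP]
          simp only
          rw [h2]
          push_cast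
          congr 2
          · congr 1
            field_simp
            ring
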